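/- Let x be an infinite word over a finite alphabet A, let k be a positive integer and let j ∈ ℕ be such that op_x(j) = k. Let u and v be the frontiers of two closed factors of x of length j (each of length at least 2), with |u| = r and |v| = p. Then |p − r| ≤ k. -/

import Mathlib

/-- `w` occurs in the infinite word `x` at position `m`. -/
def OccursAt {A : Type*} (x : ℕ → A) (w : List A) (m : ℕ) : Prop :=
  w = (List.range w.length).map fun i => x (m + i)

/-- `w` is a factor of the infinite word `x`. -/
def IsFactorOf {A : Type*} (x : ℕ → A) (w : List A) : Prop :=
  ∃ m, OccursAt x w m

/-- `w` is a recurrent factor of `x` : it occurs at infinitely many positions. -/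
def IsRecurrentFactor {A : Type*} (x : ℕ → A) (w : List A) : Prop :=
  ∀ N, ∃ m, N ≤ m ∧ OccursAt x w m

/-- The set of positions at which `u` occurs inside the finite word `w`. -/
def occSet {A : Type*} (u w : List A) : Set ℕ := {i | u <+: w.drop i}

/-- `u` is a border of `w`: nonempty, strictly shorter than `w`,
and both a prefix and a suffix of `w`. -/
def IsBorder {A : Type*} (u w : List A) : Prop :=
  0 < u.length ∧ u.length < w.length ∧ u <+: w ∧ u <:+ w

/-- A finite word is closed if it is a single letter or it has a border
occurring exactly twice in it. -/
def IsClosedWord {A : Type*} (w : List A) : Prop :=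
  w.length = 1 ∨ ∃ u, IsBorder u w ∧ (occSet u w).ncard = 2

/-- A nonempty finite word is open if it is not closed. -/
def IsOpenWord {A : Type*} (w : List A) : Prop :=
  w ≠ [] ∧ ¬ IsClosedWord w

/-- The frontier of a closed word is its longest border. -/
def IsFrontier {A : Type*} (u w : List A) : Prop :=
  IsBorder u w ∧ ∀ v, IsBorder v w → v.length ≤ u.length

/-- number of closed factors of `x` of length `n`. -/
noncomputable def clComp {A : Type*} (x : ℕ → A) (n : ℕ) : ℕ :=
  {w : List A | w.length = n ∧ IsFactorOf x w ∧ IsClosedWord w}.ncard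

/-- number of open factors of `x` of length `n`. -/
noncomputable def opComp {A : Type*} (x : ℕ → A) (n : ℕ) : ℕ :=
  {w : List A | w.length = n ∧ IsFactorOf x w ∧ IsOpenWord w}.ncard

/-- `x` is ultimately periodic: `x = u v v v ⋯` for some `u`, `v` with `v` nonempty,
expressed via: every finite word `u v^n` is a prefix of `x`. -/
def UltPeriodic {A : Type*} (x : ℕ → A) : Prop :=
  ∃ u v : List A, v ≠ [] ∧ ∀ n : ℕ, OccursAt x (u ++ (List.replicate n v).flatten) 0

/-- `S ⊆ ℕ` is syndetic with gaps smaller than `d`: `S ∩ [n, n+d] ≠ ∅` for all `n`. -/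
def SyndeticWithGaps (S : Set ℕ) (d : ℕ) : Prop :=
  ∀ n : ℕ, ∃ m ∈ S, n ≤ m ∧ m ≤ n + d

/-- `S ⊆ ℕ` is syndetic. -/
def Syndetic (S : Set ℕ) : Prop :=
  ∃ d : ℕ, SyndeticWithGaps S d

namespace FrAux

variable {A : Type*}

/-- the window of length `j` at position `n` of `x`. -/
def W (x : ℕ → A) (j n : ℕ) : List A := (List.range j).map fun i => x (n + i)

@[simp] lemma W_length (x : ℕ → A) (j n : ℕ) : (W x j n).length = j := by
  simp [W]

@[simp] lemma W_getElem (x : ℕ → A) {j n i : ℕ} (h : i < (W x j n).length) :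
    (W x j n)[i] = x (n + i) := by
  simp [W]

lemma occursAt_W (x : ℕ → A) (j n : ℕ) : OccursAt x (W x j n) n := by
  unfold OccursAt
  rw [W_length]
  rfl

lemma factor_W (x : ℕ → A) (j n : ℕ) : IsFactorOf x (W x j n) := ⟨n, occursAt_W x j n⟩

lemma eq_W_of_occursAt {x : ℕ → A} {w : List A} {m j : ℕ} (h : OccursAt x w m)
    (hl : w.length = j) : w = W x j m := by
  unfold OccursAt at h
  rw [hl] at h
  exact h

lemma W_eq_iff {x : ℕ → A} {b m m' : ℕ} :
    W x b m = W x b m' ↔ ∀ d < b, x (m + d) = x (m' + d) := by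
  constructor
  · intro h d hd
    have h1 : d < (W x b m).length := by simpa using hd
    have h2 : d < (W x b m').length := by simpa using hd
    have e : (W x b m)[d]'h1 = (W x b m')[d]'h2 := by
      congr 1
    simpa using e
  · intro h
    apply List.ext_getElem (by simp)
    intro i h1 h2
    simp only [W_getElem]
    exact h i (by simpa using h1)

lemma W_take {x : ℕ → A} {j n b : ℕ} (h : b ≤ j) : (W x j n).take b = W x b n := by
  simp [W, ← List.map_take, List.take_range, Nat.min_eq_left h]

lemma W_drop (x : ℕ → A) (j n i : ℕ) : (W x j n).drop i = W x (j - i) (n + i) := by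
  apply List.ext_getElem (by simp)
  intro d h1 h2
  rw [List.getElem_drop]
  simp only [W_getElem]
  congr 1
  omega

lemma W_prefix_W_iff {x : ℕ → A} {b c m m' : ℕ} :
    W x b m <+: W x c m' ↔ b ≤ c ∧ ∀ d < b, x (m + d) = x (m' + d) := by
  constructor
  · intro h
    have hl : b ≤ c := by simpa using h.length_le
    refine ⟨hl, fun d hd => ?_⟩
    have := h.getElem (i := d) (by simpa using hd)
    simpa using this
  · rintro ⟨hl, hp⟩
    rw [List.prefix_iff_eq_take, W_length, W_take hl]
    exact W_eq_iff.2 hp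
/-- `x[a..a+ℓ) = x[b..b+ℓ)` -/
def Agr (x : ℕ → A) (a b ℓ : ℕ) : Prop := ∀ d < ℓ, x (a + d) = x (b + d)

/-- window at `n` of length `j` has a repeated suffix of length `ℓ`. -/
def RS (x : ℕ → A) (j n ℓ : ℕ) : Prop :=
  ∃ i, i + ℓ < j ∧ Agr x (n + i) (n + (j - ℓ)) ℓ

/-- window at `n` of length `j` has a repeated prefix of length `ℓ`. -/
def RP (x : ℕ → A) (j n ℓ : ℕ) : Prop :=
  ∃ i, 0 < i ∧ i + ℓ ≤ j ∧ Agr x n (n + i) ℓ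

/-- the window at `n` is closed with a border of length `b` occurring exactly twice. -/
def CW (x : ℕ → A) (j n b : ℕ) : Prop :=
  0 < b ∧ b < j ∧ Agr x n (n + (j - b)) b ∧
    ∀ i, i + b ≤ j → Agr x n (n + i) b → i = 0 ∨ i = j - b

variable {x : ℕ → A} {j n b ℓ ℓ' : ℕ}

lemma Agr.symm {a b : ℕ} (h : Agr x a b ℓ) : Agr x b a ℓ := fun d hd => (h d hd).symm

lemma Agr.mono {a b : ℕ} (h : Agr x a b ℓ) (h' : ℓ' ≤ ℓ) : Agr x a b ℓ' :=
  fun d hd => h d (lt_of_lt_of_le hd h')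

lemma RS.mono (h : RS x j n ℓ) (h' : ℓ' ≤ ℓ) : RS x j n ℓ' := by
  obtain ⟨i, hi, ha⟩ := h
  refine ⟨i + (ℓ - ℓ'), by omega, fun d hd => ?_⟩
  have e1 : n + (i + (ℓ - ℓ')) + d = n + i + ((ℓ - ℓ') + d) := by omega
  have e2 : n + (j - ℓ') + d = n + (j - ℓ) + ((ℓ - ℓ') + d) := by omega
  rw [e1, e2]
  exact ha _ (by omega)

lemma RP.mono (h : RP x j n ℓ) (h' : ℓ' ≤ ℓ) : RP x j n ℓ' := by
  obtain ⟨i, hi0, hi, ha⟩ := h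
  exact ⟨i, hi0, by omega, ha.mono h'⟩

/-- sliding right, the longest repeated suffix grows by at most one. -/
lemma RS.shift (h : RS x j (n + 1) (ℓ + 1)) : RS x j n ℓ := by
  obtain ⟨i, hi, ha⟩ := h
  refine ⟨i + 1, by omega, fun d hd => ?_⟩
  have e1 : n + (i + 1) + d = n + 1 + i + d := by omega
  have e2 : n + (j - ℓ) + d = n + 1 + (j - (ℓ + 1)) + d := by omega
  rw [e1, e2]
  exact ha d (by omega)

/-- sliding right, the longest repeated prefix shrinks by at most one. -/
lemma RP.shift (h : RP x j n (ℓ + 1)) : RP x j (n + 1) ℓ := by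
  obtain ⟨i, hi0, hi, ha⟩ := h
  refine ⟨i, hi0, by omega, fun d hd => ?_⟩
  have e1 : n + 1 + d = n + (1 + d) := by omega
  have e2 : n + 1 + i + d = n + i + (1 + d) := by omega
  rw [e1, e2]
  exact ha _ (by omega)

lemma CW.rs (h : CW x j n b) : RS x j n b := by
  obtain ⟨h1, h2, h3, -⟩ := h
  exact ⟨0, by omega, by simpa using h3⟩

lemma CW.rp (h : CW x j n b) : RP x j n b := by
  obtain ⟨h1, h2, h3, -⟩ := h
  exact ⟨j - b, by omega, by omega, h3⟩

lemma CW.not_rs (h : CW x j n b) : ¬ RS x j n (b + 1) := by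
  rintro ⟨i, hi, ha⟩
  obtain ⟨hb0, hbj, hagr, hocc⟩ := h
  have key : Agr x n (n + (i + 1)) b := by
    intro d hd
    have e1 : n + (i + 1) + d = n + i + (1 + d) := by omega
    have e2 : n + (j - (b + 1)) + (1 + d) = n + (j - b) + d := by omega
    calc x (n + d) = x (n + (j - b) + d) := hagr d hd
    _ = x (n + (j - (b + 1)) + (1 + d)) := by rw [e2]
    _ = x (n + i + (1 + d)) := (ha (1 + d) (by omega)).symm
    _ = x (n + (i + 1) + d) := by rw [e1]
  rcases hocc (i + 1) (by omega) key with h' | h' <;> omega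

lemma CW.not_rs_succ (h : CW x j n b) : ¬ RS x j (n + 1) (b + 1) := by
  rintro ⟨i, hi, ha⟩
  obtain ⟨hb0, hbj, hagr, hocc⟩ := h
  have key : Agr x n (n + (i + 1)) b := by
    intro d hd
    have e1 : n + (i + 1) + d = n + 1 + i + d := by omega
    have e2 : n + 1 + (j - (b + 1)) + d = n + (j - b) + d := by omega
    calc x (n + d) = x (n + (j - b) + d) := hagr d hd
    _ = x (n + 1 + (j - (b + 1)) + d) := by rw [e2]
    _ = x (n + 1 + i + d) := (ha d (by omega)).symm
    _ = x (n + (i + 1) + d) := by rw [e1]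
  rcases hocc (i + 1) (by omega) key with h' | h' <;> omega

lemma CW.not_rp (h : CW x j n b) : ¬ RP x j n (b + 1) := by
  rintro ⟨i, hi0, hi, ha⟩
  rcases h.2.2.2 i (by omega) (ha.mono (by omega)) with h' | h' <;> omega

lemma CW.not_rp_pred (h : CW x j (n + 1) b) : ¬ RP x j n (b + 1) := by
  rintro ⟨i, hi0, hi, ha⟩
  have key : Agr x (n + 1) (n + 1 + i) b := by
    intro d hd
    have e1 : n + 1 + d = n + (1 + d) := by omega
    have e2 : n + 1 + i + d = n + i + (1 + d) := by omega
    rw [e1, e2]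
    exact ha _ (by omega)
  rcases h.2.2.2 i (by omega) key with h' | h' <;> omega
/-- occurrence of the length-`b` prefix pattern at offset `i`, in list terms vs `Agr` terms. -/
lemma occ_iff {u : List A} (hu : u = W x b n) (hb : 0 < b) (i : ℕ) :
    u <+: (W x j n).drop i ↔ (i + b ≤ j ∧ Agr x n (n + i) b) := by
  rw [hu, W_drop, W_prefix_W_iff]
  constructor
  · rintro ⟨h1, h2⟩
    exact ⟨by omega, h2⟩
  · rintro ⟨h1, h2⟩
    exact ⟨by omega, h2⟩

lemma occSet_sub {u : List A} (hu : u = W x b n) (hb : 0 < b) :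
    occSet u (W x j n) ⊆ Set.Iic j := by
  intro i hi
  have := (occ_iff hu hb i).1 hi
  simp only [Set.mem_Iic]
  omega

/-- From a closed window of length `j ≥ 2`, extract the numeric witness. -/
lemma CW_of_closed (hj : 2 ≤ j) (h : IsClosedWord (W x j n)) : ∃ b, CW x j n b := by
  rcases h with h1 | ⟨u, ⟨hu0, hul, hupre, husuf⟩, hcard⟩
  · rw [W_length] at h1; omega
  set b := u.length with hb
  rw [W_length] at hul
  have hu : u = W x b n :=
    (List.prefix_iff_eq_take.1 hupre).trans (W_take (le_of_lt hul))
  have husuf' : u = W x b (n + (j - b)) := by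
    have h1 := List.suffix_iff_eq_drop.1 husuf
    rw [W_length, W_drop] at h1
    rw [h1]
    congr 1 <;> omega
  have hagr : Agr x n (n + (j - b)) b := by
    intro d hd
    have := W_eq_iff.1 (hu.symm.trans husuf')
    exact this d hd
  have h0 : 0 ∈ occSet u (W x j n) :=
    (occ_iff hu hu0 0).2 ⟨by omega, fun d hd => by simp⟩
  have hq : j - b ∈ occSet u (W x j n) :=
    (occ_iff hu hu0 (j - b)).2 ⟨by omega, hagr⟩
  refine ⟨b, hu0, hul, hagr, fun i hib hia => ?_⟩
  by_contra hcon
  push_neg at hcon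
  obtain ⟨hi0, hiq⟩ := hcon
  have hi : i ∈ occSet u (W x j n) :=
    (occ_iff hu hu0 i).2 ⟨hib, hia⟩
  have hfin : (occSet u (W x j n)).Finite :=
    (Set.finite_Iic j).subset (occSet_sub hu hu0)
  have hsub : ({0, j - b, i} : Set ℕ) ⊆ occSet u (W x j n) := by
    intro y hy
    rcases hy with rfl | rfl | rfl
    exacts [h0, hq, hi]
  have h3 : ({0, j - b, i} : Set ℕ).ncard = 3 := by
    rw [Set.ncard_insert_of_notMem (by simp; omega),
        Set.ncard_insert_of_notMem (by simpa using hiq.symm), Set.ncard_singleton]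
  have := Set.ncard_le_ncard hsub hfin
  rw [h3, hcard] at this
  omega

/-- the witness border length equals the frontier length. -/
lemma frontier_len_eq {u : List A} (hcw : CW x j n b) (hf : IsFrontier u (W x j n)) :
    u.length = b := by
  obtain ⟨hb0, hbj, hagr, hocc⟩ := hcw
  obtain ⟨⟨hu0, hul, hupre, husuf⟩, hmax⟩ := hf
  rw [W_length] at hul
  -- the CW witness border as a list
  have hborder : IsBorder (W x b n) (W x j n) := by
    refine ⟨by simpa using hb0, by simp; omega, W_prefix_W_iff.2 ⟨by omega, fun d hd => rfl⟩, ?_⟩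
    rw [List.suffix_iff_eq_drop, W_length, W_length, W_drop]
    apply (W_eq_iff (b := b)).2 ?_ |>.trans (by congr 1; omega)
    exact fun d hd => hagr d hd
  have hge : b ≤ u.length := by simpa using hmax _ hborder
  -- u is itself a border; show its length f satisfies f ≤ b
  set f := u.length with hfdef
  by_contra hne
  have hfb : b < f := by omega
  have hu : u = W x f n :=
    (List.prefix_iff_eq_take.1 hupre).trans (W_take (le_of_lt hul))
  have husuf' : u = W x f (n + (j - f)) := by
    have h1 := List.suffix_iff_eq_drop.1 husuf
    rw [W_length, W_drop] at h1
    rw [h1]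
    congr 1 <;> omega
  have hbagr : ∀ e < f, x (n + e) = x (n + (j - f) + e) :=
    W_eq_iff.1 (hu.symm.trans husuf')
  have key : Agr x n (n + (f - b)) b := by
    intro d hd
    have e2 : n + (j - f) + (f - b + d) = n + (j - b) + d := by omega
    calc x (n + d) = x (n + (j - b) + d) := hagr d hd
    _ = x (n + (j - f) + (f - b + d)) := by rw [e2]
    _ = x (n + (f - b + d)) := (hbagr _ (by omega)).symm
    _ = x (n + (f - b) + d) := by rw [Nat.add_assoc]
  rcases hocc (f - b) (by omega) key with h' | h' <;> omega

/-- a window whose longest repeated suffix / prefix is `t` but which "increases" is open. -/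
lemma open_of_rs (hj : 2 ≤ j) {t : ℕ} (h1 : RS x j n t) (h2 : ¬ RS x j n (t + 1))
    (h3 : RS x j (n + 1) (t + 1)) : IsOpenWord (W x j n) := by
  refine ⟨by intro h; have := congrArg List.length h; simp at this; omega, fun hcl => ?_⟩
  obtain ⟨b, hcw⟩ := CW_of_closed hj hcl
  have hbt : b = t := by
    have hrb := hcw.rs
    have hnb := hcw.not_rs
    by_contra hne
    rcases Nat.lt_or_ge b t with h' | h'
    · exact hnb (h1.mono (by omega))
    · exact h2 (hrb.mono (by omega))
  subst hbt
  exact hcw.not_rs_succ h3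

lemma open_of_rp (hj : 2 ≤ j) {t : ℕ} (h1 : RP x j (n + 1) t) (h2 : ¬ RP x j (n + 1) (t + 1))
    (h3 : RP x j n (t + 1)) : IsOpenWord (W x j (n + 1)) := by
  refine ⟨by intro h; have := congrArg List.length h; simp at this; omega, fun hcl => ?_⟩
  obtain ⟨b, hcw⟩ := CW_of_closed hj hcl
  have hbt : b = t := by
    have hrb := hcw.rp
    have hnb := hcw.not_rp
    by_contra hne
    rcases Nat.lt_or_ge b t with h' | h'
    · exact hnb (h1.mono (by omega))
    · exact h2 (hrb.mono (by omega))
  subst hbt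
  exact hcw.not_rp_pred h3

/-- `RS` only depends on the window's content. -/
lemma RS_congr {n n' : ℕ} (h : W x j n = W x j n') (hr : RS x j n ℓ) : RS x j n' ℓ := by
  have hpt : ∀ i < j, x (n + i) = x (n' + i) := W_eq_iff.1 h
  obtain ⟨i, hi, ha⟩ := hr
  refine ⟨i, hi, fun d hd => ?_⟩
  have e1 : n' + i + d = n' + (i + d) := by omega
  have e2 : n' + (j - ℓ) + d = n' + ((j - ℓ) + d) := by omega
  have e3 : n + i + d = n + (i + d) := by omega
  have e4 : n + (j - ℓ) + d = n + ((j - ℓ) + d) := by omega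
  rw [e1, e2, ← hpt (i + d) (by omega), ← hpt ((j - ℓ) + d) (by omega), ← e3, ← e4]
  exact ha d hd

lemma RP_congr {n n' : ℕ} (h : W x j n = W x j n') (hr : RP x j n ℓ) : RP x j n' ℓ := by
  have hpt : ∀ i < j, x (n + i) = x (n' + i) := W_eq_iff.1 h
  obtain ⟨i, hi0, hi, ha⟩ := hr
  refine ⟨i, hi0, hi, fun d hd => ?_⟩
  have e1 : n' + i + d = n' + (i + d) := by omega
  have e3 : n + i + d = n + (i + d) := by omega
  rw [e1, ← hpt (i + d) (by omega), ← hpt d (by omega), ← e3]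
  exact ha d hd
lemma cross (Q : ℕ → Prop) : ∀ n₂ n₁ : ℕ, n₁ ≤ n₂ → ¬ Q n₁ → Q n₂ →
    ∃ n, n₁ ≤ n ∧ ¬ Q n ∧ Q (n + 1) := by
  intro n₂
  induction n₂ with
  | zero =>
    intro n₁ h h1 h2
    interval_cases n₁
    exact absurd h2 h1
  | succ m ih =>
    intro n₁ h h1 h2
    rcases eq_or_lt_of_le h with rfl | hlt
    · exact absurd h2 h1
    · by_cases hm : Q m
      · exact ih n₁ (by omega) h1 hm
      · exact ⟨m, by omega, hm, h2⟩

open Classical in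
/-- number of open factors bounds increases of the frontier length. -/
lemma master_RS {b₁ b₂ n₁ n₂ : ℕ} (hj : 2 ≤ j)
    (hFin : {w : List A | w.length = j ∧ IsFactorOf x w ∧ IsOpenWord w}.Finite)
    (h12 : n₁ ≤ n₂) (h1 : CW x j n₁ b₁) (h2 : CW x j n₂ b₂) :
    b₂ - b₁ ≤ {w : List A | w.length = j ∧ IsFactorOf x w ∧ IsOpenWord w}.ncard := by
  set Op := {w : List A | w.length = j ∧ IsFactorOf x w ∧ IsOpenWord w} with hOp
  rcases le_or_gt b₂ b₁ with hb | hb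
  · simp [Nat.sub_eq_zero_of_le hb]
  have key : ∀ t : ℕ, ∃ n, t ∈ Finset.Ico b₁ b₂ →
      (RS x j n t ∧ ¬ RS x j n (t + 1) ∧ RS x j (n + 1) (t + 1)) := by
    intro t
    by_cases ht : t ∈ Finset.Ico b₁ b₂
    · rw [Finset.mem_Ico] at ht
      have hQ1 : ¬ RS x j n₁ (t + 1) := fun h => h1.not_rs (h.mono (by omega))
      have hQ2 : RS x j n₂ (t + 1) := h2.rs.mono (by omega)
      obtain ⟨n, hn1, hn2, hn3⟩ := cross (fun m => RS x j m (t + 1)) n₂ n₁ h12 hQ1 hQ2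
      exact ⟨n, fun _ => ⟨hn3.shift, hn2, hn3⟩⟩
    · exact ⟨0, fun h => absurd h ht⟩
  choose f hf using key
  have hmem : ∀ t ∈ Finset.Ico b₁ b₂, W x j (f t) ∈ Op := by
    intro t ht
    obtain ⟨q1, q2, q3⟩ := hf t ht
    exact ⟨W_length x j (f t), factor_W x j (f t), open_of_rs hj q1 q2 q3⟩
  have hinj : Set.InjOn (fun t => W x j (f t)) ↑(Finset.Ico b₁ b₂) := by
    have haux : ∀ t ∈ Finset.Ico b₁ b₂, ∀ t' ∈ Finset.Ico b₁ b₂,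
        t < t' → W x j (f t) = W x j (f t') → False := by
      intro t ht t' ht' hlt heq
      obtain ⟨q1, q2, q3⟩ := hf t ht
      obtain ⟨q1', q2', q3'⟩ := hf t' ht'
      exact q2 ((RS_congr heq.symm q1').mono (by omega))
    intro t ht t' ht' heq
    simp only [Finset.coe_Ico, Set.mem_Ico] at ht ht'
    rcases lt_trichotomy t t' with h | h | h
    · exact absurd (haux t (by simp [Finset.mem_Ico]; omega) t'
        (by simp [Finset.mem_Ico]; omega) h heq) not_false
    · exact h
    · exact absurd (haux t' (by simp [Finset.mem_Ico]; omega) t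
        (by simp [Finset.mem_Ico]; omega) h heq.symm) not_false
  calc b₂ - b₁ = (Finset.Ico b₁ b₂).card := (Nat.card_Ico b₁ b₂).symm
  _ = ((Finset.Ico b₁ b₂).image (fun t => W x j (f t))).card :=
      (Finset.card_image_of_injOn hinj).symm
  _ = (↑((Finset.Ico b₁ b₂).image (fun t => W x j (f t))) : Set (List A)).ncard :=
      (Set.ncard_coe_finset _).symm
  _ ≤ Op.ncard := by
      apply Set.ncard_le_ncard ?_ hFin
      intro w hw
      simp only [Finset.coe_image, Set.mem_image, Finset.mem_coe] at hw
      obtain ⟨t, ht, rfl⟩ := hw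
      exact hmem t ht

open Classical in
/-- number of open factors bounds decreases of the frontier length. -/
lemma master_RP {b₁ b₂ n₁ n₂ : ℕ} (hj : 2 ≤ j)
    (hFin : {w : List A | w.length = j ∧ IsFactorOf x w ∧ IsOpenWord w}.Finite)
    (h12 : n₁ ≤ n₂) (h1 : CW x j n₁ b₁) (h2 : CW x j n₂ b₂) :
    b₁ - b₂ ≤ {w : List A | w.length = j ∧ IsFactorOf x w ∧ IsOpenWord w}.ncard := by
  set Op := {w : List A | w.length = j ∧ IsFactorOf x w ∧ IsOpenWord w} with hOp
  rcases le_or_gt b₁ b₂ with hb | hb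
  · simp [Nat.sub_eq_zero_of_le hb]
  have key : ∀ t : ℕ, ∃ n, t ∈ Finset.Ico b₂ b₁ →
      (RP x j (n + 1) t ∧ ¬ RP x j (n + 1) (t + 1) ∧ RP x j n (t + 1)) := by
    intro t
    by_cases ht : t ∈ Finset.Ico b₂ b₁
    · rw [Finset.mem_Ico] at ht
      have hQ1 : RP x j n₁ (t + 1) := h1.rp.mono (by omega)
      have hQ2 : ¬ RP x j n₂ (t + 1) := fun h => h2.not_rp (h.mono (by omega))
      obtain ⟨n, hn1, hn2, hn3⟩ :=
        cross (fun m => ¬ RP x j m (t + 1)) n₂ n₁ h12 (not_not.2 hQ1) hQ2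
      rw [not_not] at hn2
      exact ⟨n, fun _ => ⟨hn2.shift, hn3, hn2⟩⟩
    · exact ⟨0, fun h => absurd h ht⟩
  choose f hf using key
  have hmem : ∀ t ∈ Finset.Ico b₂ b₁, W x j (f t + 1) ∈ Op := by
    intro t ht
    obtain ⟨q1, q2, q3⟩ := hf t ht
    exact ⟨W_length x j (f t + 1), factor_W x j (f t + 1), open_of_rp hj q1 q2 q3⟩
  have hinj : Set.InjOn (fun t => W x j (f t + 1)) ↑(Finset.Ico b₂ b₁) := by
    have haux : ∀ t ∈ Finset.Ico b₂ b₁, ∀ t' ∈ Finset.Ico b₂ b₁,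
        t < t' → W x j (f t + 1) = W x j (f t' + 1) → False := by
      intro t ht t' ht' hlt heq
      obtain ⟨q1, q2, q3⟩ := hf t ht
      obtain ⟨q1', q2', q3'⟩ := hf t' ht'
      exact q2 ((RP_congr heq.symm q1').mono (by omega))
    intro t ht t' ht' heq
    simp only [Finset.coe_Ico, Set.mem_Ico] at ht ht'
    rcases lt_trichotomy t t' with h | h | h
    · exact absurd (haux t (by simp [Finset.mem_Ico]; omega) t'
        (by simp [Finset.mem_Ico]; omega) h heq) not_false
    · exact h
    · exact absurd (haux t' (by simp [Finset.mem_Ico]; omega) t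
        (by simp [Finset.mem_Ico]; omega) h heq.symm) not_false
  calc b₁ - b₂ = (Finset.Ico b₂ b₁).card := (Nat.card_Ico b₂ b₁).symm
  _ = ((Finset.Ico b₂ b₁).image (fun t => W x j (f t + 1))).card :=
      (Finset.card_image_of_injOn hinj).symm
  _ = (↑((Finset.Ico b₂ b₁).image (fun t => W x j (f t + 1))) : Set (List A)).ncard :=
      (Set.ncard_coe_finset _).symm
  _ ≤ Op.ncard := by
      apply Set.ncard_le_ncard ?_ hFin
      intro w hw
      simp only [Finset.coe_image, Set.mem_image, Finset.mem_coe] at hw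
      obtain ⟨t, ht, rfl⟩ := hw
      exact hmem t ht

end FrAux

/-- If `op_x(j) = k` and `u`, `v` are the frontiers of two closed factors of
`x` of length `j`, with `|u| = r` and `|v| = p`, then `|p − r| ≤ k`. -/
theorem frontier_length_diff_le_open_complexity
    {A : Type*} [Fintype A] (x : ℕ → A) (k j : ℕ) (hk : 0 < k)
    (hop : opComp x j = k)
    (w₁ w₂ u v : List A)
    (hw₁ : IsFactorOf x w₁) (hw₂ : IsFactorOf x w₂)
    (hl₁ : w₁.length = j) (hl₂ : w₂.length = j)
    (h2₁ : 2 ≤ w₁.length) (h2₂ : 2 ≤ w₂.length)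
    (hc₁ : IsClosedWord w₁) (hc₂ : IsClosedWord w₂)
    (hf₁ : IsFrontier u w₁) (hf₂ : IsFrontier v w₂)
    (r p : ℕ) (hr : u.length = r) (hp : v.length = p) :
    |(p : ℤ) - (r : ℤ)| ≤ (k : ℤ) := by
  classical
  have hj : 2 ≤ j := hl₁ ▸ h2₁
  obtain ⟨m₁, hm₁⟩ := hw₁
  obtain ⟨m₂, hm₂⟩ := hw₂
  have hW₁ : w₁ = FrAux.W x j m₁ := FrAux.eq_W_of_occursAt hm₁ hl₁
  have hW₂ : w₂ = FrAux.W x j m₂ := FrAux.eq_W_of_occursAt hm₂ hl₂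
  rw [hW₁] at hc₁ hf₁
  rw [hW₂] at hc₂ hf₂
  obtain ⟨b₁, hcw₁⟩ := FrAux.CW_of_closed hj hc₁
  obtain ⟨b₂, hcw₂⟩ := FrAux.CW_of_closed hj hc₂
  have hrb : r = b₁ := hr ▸ FrAux.frontier_len_eq hcw₁ hf₁
  have hpb : p = b₂ := hp ▸ FrAux.frontier_len_eq hcw₂ hf₂
  -- finiteness of the set of open factors of length j
  by_cases hFin : ({w : List A | w.length = j ∧ IsFactorOf x w ∧ IsOpenWord w}).Finite
  · have hncard : ({w : List A | w.length = j ∧ IsFactorOf x w ∧ IsOpenWord w}).ncard = k :=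
      hop
    have hboth : b₂ - b₁ ≤ k ∧ b₁ - b₂ ≤ k := by
      rcases le_total m₁ m₂ with hm | hm
      · exact ⟨hncard ▸ FrAux.master_RS hj hFin hm hcw₁ hcw₂,
          hncard ▸ FrAux.master_RP hj hFin hm hcw₁ hcw₂⟩
      · exact ⟨hncard ▸ FrAux.master_RP hj hFin hm hcw₂ hcw₁,
          hncard ▸ FrAux.master_RS hj hFin hm hcw₂ hcw₁⟩
    obtain ⟨hx1, hx2⟩ := hboth
    rw [abs_le]
    constructor <;> omega
  · exfalso
    have : ({w : List A | w.length = j ∧ IsFactorOf x w ∧ IsOpenWord w}).ncard = 0 :=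
      Set.Infinite.ncard hFin
    have : k = 0 := by rw [← hop]; exact this
    omega
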